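/- For every integer n ≥ 1, the central symmetric binomial probability satisfies (πn)^{-1/2} · exp(−1/(7n)) < a_{0,n} < (πn)^{-1/2} · exp(−1/(9n)). -/

import Mathlib

open Real

/-- `a0 n = C(2n, n) · 2^(−2n)`: the central symmetric binomial probability. -/
noncomputable def a0 (n : ℕ) : ℝ :=
  ((2 * n).choose n : ℝ) * (2 : ℝ) ^ (-(2 * (n : ℤ)))

open Filter Stirling Finset Nat Topology

lemma step_upper (n : ℕ) :
    log (stirlingSeq (n + 1)) - log (stirlingSeq (n + 2)) ≤
      1 / (12 * ((n : ℝ) + 1)) - 1 / (12 * ((n : ℝ) + 2)) := by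
  have hm1 : (1 : ℝ) ≤ (n : ℝ) + 1 := by
    have := Nat.cast_nonneg (α := ℝ) n; linarith
  set m : ℝ := (n : ℝ) + 1 with hm
  set x : ℝ := (1 / (2 * m + 1)) ^ 2 with hx
  have hxval : x = 1 / (2*m+1)^2 := by rw [hx, div_pow, one_pow]
  have hx0 : 0 < x := by positivity
  have hx1 : x < 1 := by
    rw [hxval]
    rw [div_lt_one (by positivity)]
    nlinarith
  have hgeo : HasSum (fun k : ℕ => (1 / 3 : ℝ) * (x * x ^ k)) ((1/3) * (x / (1 - x))) :=
    ((hasSum_geometric_of_lt_one hx0.le hx1).mul_left x).mul_left (1/3)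
  have hsum := log_stirlingSeq_diff_hasSum n
  have hle : log (stirlingSeq (n + 1)) - log (stirlingSeq (n + 2)) ≤ (1/3) * (x / (1 - x)) := by
    refine hasSum_le (fun k => ?_) hsum hgeo
    have h1 : ((1 : ℝ) / (2 * ↑(n + 1) + 1)) ^ 2 = x := by rw [hx, hm]; push_cast; ring
    rw [h1]
    have h2 : (1 : ℝ) / (2 * ↑(k + 1) + 1) ≤ 1/3 := by
      apply div_le_div_of_nonneg_left (by norm_num) (by norm_num)
      push_cast; linarith [Nat.cast_nonneg (α := ℝ) k]
    calc (1 : ℝ) / (2 * ↑(k + 1) + 1) * x ^ (k+1) ≤ (1/3) * x ^ (k+1) :=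
            mul_le_mul_of_nonneg_right h2 (by positivity)
      _ = (1/3) * (x * x ^ k) := by ring
  refine hle.trans (le_of_eq ?_)
  have hC : (0:ℝ) < 1 - x := by linarith
  have h2 : ((2:ℝ)*m+1)^2 ≠ 0 := by positivity
  have hD : (0:ℝ) < (2*m+1)^2 - 1 := by nlinarith
  have e0 : x/(1-x) = 1/((2*m+1)^2-1) := by
    rw [div_eq_div_iff hC.ne' hD.ne', hxval]
    field_simp
  have e1 : (1/3 : ℝ) * (x/(1-x)) = 1/(12*m*(m+1)) :=
    calc (1/3:ℝ) * (x/(1-x)) = (1/3) * (1/((2*m+1)^2-1)) := by rw [e0]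
      _ = 1/(3*((2*m+1)^2-1)) := by rw [_root_.div_mul_div_comm]; norm_num
      _ = 1/(12*m*(m+1)) := by rw [show 3*((2*m+1)^2-1) = 12*m*(m+1) by ring]
  rw [e1]
  rw [show ((n:ℝ) + 2) = m + 1 from by rw [hm]; ring]
  rw [div_sub_div _ _ (by positivity) (by positivity)]
  rw [div_eq_div_iff (by positivity) (by positivity)]
  ring

lemma step_lower (n : ℕ) :
    1 / (12 * ((n : ℝ) + 1) + 1) - 1 / (12 * ((n : ℝ) + 2) + 1) ≤
      log (stirlingSeq (n + 1)) - log (stirlingSeq (n + 2)) := by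
  have hm1 : (1 : ℝ) ≤ (n : ℝ) + 1 := by
    have := Nat.cast_nonneg (α := ℝ) n; linarith
  set m : ℝ := (n : ℝ) + 1 with hm
  set x : ℝ := (1 / (2 * m + 1)) ^ 2 with hx
  have hxval : x = 1 / (2*m+1)^2 := by rw [hx, div_pow, one_pow]
  have hx0 : 0 < x := by positivity
  have hx1 : x < 1 := by
    rw [hxval, div_lt_one (by positivity)]
    nlinarith
  have hx3 : x / 3 < 1 := by linarith
  have hgeo : HasSum (fun k : ℕ => (x/3) * (x/3) ^ k) ((x/3) / (1 - x/3)) :=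
    (hasSum_geometric_of_lt_one (by positivity) hx3).mul_left (x/3)
  have hsum := log_stirlingSeq_diff_hasSum n
  have hle : (x/3) / (1 - x/3) ≤ log (stirlingSeq (n + 1)) - log (stirlingSeq (n + 2)) := by
    refine hasSum_le (fun k => ?_) hgeo hsum
    have h1 : ((1 : ℝ) / (2 * ↑(n + 1) + 1)) ^ 2 = x := by rw [hx, hm]; push_cast; ring
    rw [h1]
    have h3 : (2 * ((k:ℝ) + 1) + 1) ≤ 3 ^ (k+1) := by
      induction k with
      | zero => norm_num
      | succ j ih =>
        push_cast at ih ⊢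
        rw [pow_succ]
        nlinarith [pow_pos (show (0:ℝ) < 3 by norm_num) (j+1)]
    calc (x/3) * (x/3) ^ k = (1 / 3^(k+1)) * x ^ (k+1) := by
            rw [div_pow, pow_succ]; ring
      _ ≤ (1 : ℝ) / (2 * ↑(k + 1) + 1) * x ^ (k+1) := by
            apply mul_le_mul_of_nonneg_right _ (by positivity)
            apply div_le_div_of_nonneg_left (by norm_num) (by push_cast; positivity)
            push_cast
            exact h3
  refine le_trans ?_ hle
  have hC : (0:ℝ) < 1 - x/3 := by linarith
  have hden : (0:ℝ) < 3 * (2*m+1)^2 - 1 := by nlinarith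
  have e1 : (x/3) / (1 - x/3) = 1/(3*(2*m+1)^2 - 1) := by
    rw [div_eq_div_iff hC.ne' hden.ne', hxval]
    field_simp
  rw [e1]
  rw [show ((n:ℝ) + 2) = m + 1 from by rw [hm]; ring]
  rw [div_sub_div _ _ (by positivity) (by positivity)]
  rw [div_le_div_iff₀ (by positivity) hden]
  nlinarith

lemma tendsto_aux (c : ℝ) : Filter.Tendsto (fun k : ℕ => 1/(12*((k:ℝ)+1)+c)) atTop (𝓝 0) := by
  simp only [one_div]
  apply Filter.Tendsto.inv_tendsto_atTop
  have h1 : Filter.Tendsto (fun k : ℕ => 12*(k:ℝ) + (12+c)) atTop atTop :=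
    tendsto_atTop_add_const_right _ _
      (Filter.Tendsto.const_mul_atTop (by norm_num) tendsto_natCast_atTop_atTop)
  exact h1.congr (fun k => by ring)

lemma tendsto_logs : Filter.Tendsto (fun k : ℕ => log (stirlingSeq (k+1))) atTop (𝓝 (log (√π))) := by
  have hπ : (0:ℝ) < √π := Real.sqrt_pos.mpr Real.pi_pos
  exact ((Real.continuousAt_log hπ.ne').tendsto).comp
    (tendsto_stirlingSeq_sqrt_pi.comp (tendsto_add_atTop_nat 1))

lemma L_le (m : ℕ) (hm : 1 ≤ m) : log (stirlingSeq m) - log (√π) ≤ 1/(12*(m:ℝ)) := by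
  obtain ⟨k, rfl⟩ : ∃ k, m = k + 1 := ⟨m - 1, by omega⟩
  have hg : Monotone (fun k : ℕ => log (stirlingSeq (k+1)) - 1/(12*((k:ℝ)+1))) := by
    apply monotone_nat_of_le_succ
    intro j
    have e : j+1+1 = j+2 := rfl
    have := step_upper j
    rw [e]
    push_cast
    have e2 : ((j:ℝ)+1+1) = (j:ℝ)+2 := by ring
    rw [e2]
    linarith
  have ht : Filter.Tendsto (fun k : ℕ => log (stirlingSeq (k+1)) - 1/(12*((k:ℝ)+1)))
      atTop (𝓝 (log (√π) - 0)) := tendsto_logs.sub (by simpa using tendsto_aux 0)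
  have := hg.ge_of_tendsto ht k
  push_cast
  linarith

lemma le_L (m : ℕ) (hm : 1 ≤ m) : 1/(12*(m:ℝ)+1) ≤ log (stirlingSeq m) - log (√π) := by
  obtain ⟨k, rfl⟩ : ∃ k, m = k + 1 := ⟨m - 1, by omega⟩
  have hg : Antitone (fun k : ℕ => log (stirlingSeq (k+1)) - 1/(12*((k:ℝ)+1)+1)) := by
    apply antitone_nat_of_succ_le
    intro j
    have e : j+1+1 = j+2 := rfl
    have := step_lower j
    rw [e]
    push_cast
    have e2 : ((j:ℝ)+1+1) = (j:ℝ)+2 := by ring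
    rw [e2]
    linarith
  have ht : Filter.Tendsto (fun k : ℕ => log (stirlingSeq (k+1)) - 1/(12*((k:ℝ)+1)+1))
      atTop (𝓝 (log (√π) - 0)) := tendsto_logs.sub (tendsto_aux 1)
  have := hg.le_of_tendsto ht k
  push_cast
  linarith

lemma a0_eq (n : ℕ) (hn : 1 ≤ n) :
    a0 n = stirlingSeq (2*n) / (stirlingSeq n ^ 2 * Real.sqrt n) := by
  have hN : (0:ℝ) < n := by exact_mod_cast hn
  have hr : (0:ℝ) < Real.sqrt n := Real.sqrt_pos.mpr hN
  have hrr : Real.sqrt n * Real.sqrt n = (n:ℝ) := Real.mul_self_sqrt hN.le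
  have he : (0:ℝ) < exp 1 := exp_pos 1
  have hp : (0:ℝ) < ((n:ℝ)/exp 1)^n := by positivity
  have hfac : (0:ℝ) < (n ! : ℝ) := by exact_mod_cast n.factorial_pos
  have h2fac : (0:ℝ) < ((2*n)! : ℝ) := by exact_mod_cast (2*n).factorial_pos
  have h2 : Real.sqrt 2 * Real.sqrt 2 = 2 := Real.mul_self_sqrt (by norm_num)
  have hs2 : (0:ℝ) < Real.sqrt 2 := Real.sqrt_pos.mpr (by norm_num)
  -- stirlingSeq n
  have hsn : stirlingSeq n = (n ! : ℝ)/(Real.sqrt 2 * Real.sqrt n * ((n:ℝ)/exp 1)^n) := by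
    rw [stirlingSeq, Real.sqrt_mul (by norm_num) (n:ℝ)]
  -- stirlingSeq (2n)
  have hs2n : stirlingSeq (2*n)
      = ((2*n)! : ℝ)/(2 * Real.sqrt n * (4^n * (((n:ℝ)/exp 1)^n)^2)) := by
    rw [stirlingSeq]
    have e1 : (2 * ((2*n : ℕ):ℝ)) = 2^2 * (n:ℝ) := by push_cast; ring
    have e2 : Real.sqrt (2 * ((2*n : ℕ):ℝ)) = 2 * Real.sqrt n := by
      rw [e1, Real.sqrt_mul (by positivity), Real.sqrt_sq (by norm_num)]
    have e3 : (((2*n : ℕ):ℝ)/exp 1) ^ (2*n) = 4^n * (((n:ℝ)/exp 1)^n)^2 := by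
      have : ((2*n : ℕ):ℝ)/exp 1 = 2 * ((n:ℝ)/exp 1) := by push_cast; ring
      rw [this, mul_pow]
      rw [show ((2:ℝ))^(2*n) = 4^n from by rw [pow_mul]; norm_num]
      rw [← pow_mul, mul_comm 2 n]
    rw [e2, e3]
  -- choose cast
  have hchoose : (((2*n).choose n : ℕ) : ℝ) = ((2*n)! : ℝ) / ((n ! : ℝ) * (n ! : ℝ)) := by
    rw [Nat.cast_choose ℝ (by omega : n ≤ 2*n), show 2*n-n = n from by omega]
  -- power cast
  have hpow : (2:ℝ) ^ (-(2 * (n : ℤ))) = ((4:ℝ)^n)⁻¹ := by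
    rw [zpow_neg, show (2*(n:ℤ)) = ((2*n : ℕ) : ℤ) by push_cast; ring, zpow_natCast, pow_mul]
    norm_num
  rw [a0, hchoose, hpow, hsn, hs2n]
  rw [div_pow]
  field_simp
  ring_nf
  rw [show (Real.sqrt 2:ℝ)^2 = 2 from Real.sq_sqrt (by norm_num)]

theorem stmt_6 (n : ℕ) (hn : 1 ≤ n) :
    (Real.sqrt (Real.pi * n))⁻¹ * Real.exp (-(1 / (7 * (n : ℝ)))) < a0 n ∧
    a0 n < (Real.sqrt (Real.pi * n))⁻¹ * Real.exp (-(1 / (9 * (n : ℝ)))) := by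
  have hn1 : (1:ℝ) ≤ (n:ℝ) := by exact_mod_cast hn
  have hN : (0:ℝ) < n := by linarith
  have hπ : (0:ℝ) < π := Real.pi_pos
  have hr : (0:ℝ) < Real.sqrt n := Real.sqrt_pos.mpr hN
  have hsqπ : (0:ℝ) < Real.sqrt π := Real.sqrt_pos.mpr hπ
  have hsqπn : (0:ℝ) < Real.sqrt (π * n) := Real.sqrt_pos.mpr (by positivity)
  have hspos : ∀ m : ℕ, 1 ≤ m → 0 < stirlingSeq m := by
    intro m hm
    obtain ⟨k, rfl⟩ : ∃ k, m = k + 1 := ⟨m - 1, by omega⟩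
    exact Stirling.stirlingSeq'_pos k
  have hsn := hspos n hn
  have hs2n := hspos (2*n) (by omega)
  have ha0pos : 0 < a0 n := by
    apply mul_pos _ (zpow_pos (by norm_num) _)
    exact_mod_cast Nat.choose_pos (by omega : n ≤ 2*n)
  have hid := a0_eq n hn
  have hlog : log (a0 n)
      = log (stirlingSeq (2*n)) - 2 * log (stirlingSeq n) - log (Real.sqrt n) := by
    rw [hid, Real.log_div hs2n.ne' (by positivity),
      Real.log_mul (pow_ne_zero _ hsn.ne') hr.ne', Real.log_pow]
    push_cast
    ring
  have hsplit : log (Real.sqrt (π * n)) = log (Real.sqrt π) + log (Real.sqrt n) := by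
    rw [Real.sqrt_mul hπ.le, Real.log_mul hsqπ.ne' hr.ne']
  -- Robbins bounds
  have hLn_le := L_le n hn
  have hLn_ge := le_L n hn
  have hL2_le := L_le (2*n) (by omega)
  have hL2_ge := le_L (2*n) (by omega)
  push_cast at hL2_le hL2_ge
  rw [show 12*(2*(n:ℝ))+1 = 24*n+1 from by ring] at hL2_ge
  rw [show 12*(2*(n:ℝ)) = 24*n from by ring] at hL2_le
  -- numeric facts
  have f1 : 1/(42*(n:ℝ)) < 1/(24*(n:ℝ)+1) :=
    one_div_lt_one_div_of_lt (by positivity) (by linarith)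
  have f2 : 2*(1/(12*(n:ℝ))) - 1/(7*(n:ℝ)) = 1/(42*(n:ℝ)) := by
    field_simp
    ring
  have f3 : 1/(24*(n:ℝ)) + 1/(9*(n:ℝ)) = 11/(72*(n:ℝ)) := by
    field_simp
    ring
  have f4 : 11/(72*(n:ℝ)) < 2*(1/(12*(n:ℝ)+1)) := by
    rw [show 2*(1/(12*(n:ℝ)+1)) = 2/(12*(n:ℝ)+1) from by ring]
    rw [div_lt_div_iff₀ (by positivity) (by positivity)]
    nlinarith
  constructor
  · rw [← Real.exp_log ha0pos, ← Real.exp_log hsqπn, ← Real.exp_neg, ← Real.exp_add]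
    apply Real.exp_lt_exp.mpr
    rw [hlog, hsplit]
    linarith
  · rw [← Real.exp_log ha0pos, ← Real.exp_log hsqπn, ← Real.exp_neg, ← Real.exp_add]
    apply Real.exp_lt_exp.mpr
    rw [hlog, hsplit]
    linarith
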